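/- Let h be a positive integer and 0 < β < 1. There exists α > 0 depending only on h and β such that for every graph G on n vertices with p = 2e(G)/n², for all i, j ∈ [h]: ∑_{S ∈ A_{i,j}} |N(S)| ≥ (1−β) n^{j+1} p^j, where A_{i,j} is the set of i-good sequences of length j relative to (α, β, h, 1). In particular there exists an i-good sequence S of length j with |N(S)| ≥ (1−β) p^j n. -/

import Mathlib

/-- The common neighborhood of a sequence of vertices. -/
def commNbhd {V : Type} (G : SimpleGraph V) {j : ℕ} (S : Fin j → V) : Set V :=
  {v | ∀ a : Fin j, G.Adj (S a) v}

/-- The `r`-norm density `p_r(G) := ((∑_v d(v)^r)/n^{r+1})^{1/r}`. -/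
noncomputable def rnormDensity {V : Type} [Fintype V] (G : SimpleGraph V)
    [DecidableRel G.Adj] (r : ℕ) : ℝ :=
  ((∑ v : V, (G.degree v : ℝ) ^ r) / (Fintype.card V : ℝ) ^ (r + 1)) ^ ((r : ℝ)⁻¹)

/-- `IsGood G α β p h i j S` : the length-`j` vertex sequence `S` is `i`-good relative
to `(α, β, h, r)` in `G`, where `p = p_r(G)`. A sequence `T` is `0`-good if
`|N(T)| ≥ α p^{|T|} n`; for `i ≥ 1`, `S` is `i`-good if it is `0`-good and for every
`|S| ≤ k ≤ h`, at least `(1-β)|N(S)|^k` of the length-`k` sequences in `N(S)` are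
`(i-1)`-good. -/
def IsGood {V : Type} [Fintype V] (G : SimpleGraph V) (α β p : ℝ) (h : ℕ) :
    ℕ → (j : ℕ) → (Fin j → V) → Prop
  | 0, j, S => α * p ^ j * (Fintype.card V : ℝ) ≤ (Nat.card (commNbhd G S) : ℝ)
  | i + 1, j, S =>
      (α * p ^ j * (Fintype.card V : ℝ) ≤ (Nat.card (commNbhd G S) : ℝ)) ∧
      ∀ k : ℕ, j ≤ k → k ≤ h →
        (1 - β) * (Nat.card (commNbhd G S) : ℝ) ^ k ≤
          (Nat.card {T : Fin k → V // (∀ a, T a ∈ commNbhd G S) ∧ IsGood G α β p h i k T} : ℝ)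

section Helpers

open Finset

lemma isGood_zero_iff {V : Type} [Fintype V] (G : SimpleGraph V) (α β p : ℝ) (h j : ℕ)
    (S : Fin j → V) :
    IsGood G α β p h 0 j S ↔
      α * p ^ j * (Fintype.card V : ℝ) ≤ (Nat.card (commNbhd G S) : ℝ) := Iff.rfl

lemma isGood_succ_iff {V : Type} [Fintype V] (G : SimpleGraph V) (α β p : ℝ) (h i j : ℕ)
    (S : Fin j → V) :
    IsGood G α β p h (i+1) j S ↔
      ((α * p ^ j * (Fintype.card V : ℝ) ≤ (Nat.card (commNbhd G S) : ℝ)) ∧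
      ∀ k : ℕ, j ≤ k → k ≤ h →
        (1 - β) * (Nat.card (commNbhd G S) : ℝ) ^ k ≤
          (Nat.card {T : Fin k → V // (∀ a, T a ∈ commNbhd G S) ∧ IsGood G α β p h i k T} : ℝ)) :=
  Iff.rfl

open scoped Classical in
lemma card_tuples {V : Type} [Fintype V] (s : Set V) (k : ℕ) :
    Nat.card {T : Fin k → V // ∀ a, T a ∈ s} = Nat.card s ^ k := by
  have e : {T : Fin k → V // ∀ a, T a ∈ s} ≃ (Fin k → s) :=
    { toFun := fun T a => ⟨T.1 a, T.2 a⟩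
      invFun := fun f => ⟨fun a => f a, fun a => (f a).2⟩
      left_inv := fun T => rfl
      right_inv := fun f => rfl }
  rw [Nat.card_congr e, Nat.card_fun]
  simp

open scoped Classical in
lemma filter_card_tuples {V : Type} [Fintype V] (s : Set V) (k : ℕ) :
    (univ.filter (fun T : Fin k → V => ∀ a, T a ∈ s)).card = Nat.card s ^ k := by
  rw [← card_tuples s k, Nat.card_eq_fintype_card, Fintype.card_subtype]

open scoped Classical in
lemma card_split {V : Type} [Fintype V] {k : ℕ} (P Q : (Fin k → V) → Prop) :
    Nat.card {T : Fin k → V // P T ∧ Q T} + Nat.card {T : Fin k → V // P T ∧ ¬ Q T}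
      = Nat.card {T : Fin k → V // P T} := by
  simp only [Nat.card_eq_fintype_card, Fintype.card_subtype]
  rw [← Finset.filter_filter, ← Finset.filter_filter]
  exact Finset.card_filter_add_card_filter_not (fun T => Q T)

open scoped Classical in
lemma double_count {V : Type} [Fintype V] (G : SimpleGraph V) (ℓ k : ℕ)
    (Bad : (Fin k → V) → Prop) [DecidablePred Bad] :
    ∑ S : Fin ℓ → V,
        ((univ.filter (fun T : Fin k → V => (∀ a, T a ∈ commNbhd G S) ∧ Bad T)).card : ℕ)
      = ∑ T : Fin k → V, (if Bad T then (Nat.card (commNbhd G T)) ^ ℓ else 0) := by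
  simp only [Finset.card_filter]
  rw [Finset.sum_comm]
  refine Finset.sum_congr rfl (fun T _ => ?_)
  have hmem : ∀ S : Fin ℓ → V,
      (∀ a, T a ∈ commNbhd G S) ↔ (∀ b, S b ∈ commNbhd G T) := by
    intro S
    constructor
    · intro hT b a; exact (hT a b).symm
    · intro hS a b; exact (hS b a).symm
  by_cases hb : Bad T
  · simp only [hb, and_true, if_true]
    rw [← filter_card_tuples (commNbhd G T) ℓ, Finset.card_filter]
    refine Finset.sum_congr rfl (fun S _ => ?_)
    simp [hmem S]
  · simp [hb]

lemma sum_union_le' {ι : Type*} [DecidableEq ι] (A B : Finset ι) (g : ι → ℝ)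
    (hg : ∀ i, 0 ≤ g i) : ∑ x ∈ A ∪ B, g x ≤ ∑ x ∈ A, g x + ∑ x ∈ B, g x := by
  rw [← Finset.union_sdiff_self_eq_union, Finset.sum_union Finset.disjoint_sdiff]
  exact add_le_add le_rfl (Finset.sum_le_sum_of_subset_of_nonneg (Finset.sdiff_subset)
    (fun i _ _ => hg i))

lemma sum_biUnion_le' {ι κ : Type*} [DecidableEq ι] (s : Finset κ) (t : κ → Finset ι)
    (g : ι → ℝ) (hg : ∀ i, 0 ≤ g i) :
    ∑ x ∈ s.biUnion t, g x ≤ ∑ k ∈ s, ∑ x ∈ t k, g x := by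
  classical
  induction s using Finset.induction with
  | empty => simp
  | insert _ _ h ih =>
      rw [Finset.biUnion_insert, Finset.sum_insert h]
      exact le_trans (sum_union_le' _ _ g hg) (add_le_add le_rfl ih)

open Real in
lemma holder_pow {ι : Type*} (F : Finset ι) (f : ι → ℝ) (hf : ∀ i, 0 ≤ f i) {w k : ℕ}
    (hw : 1 ≤ w) (hwk : w ≤ k) :
    ∑ i ∈ F, f i ^ w ≤
      ((F.card : ℝ) ^ (1 - (w:ℝ)/k)) * (∑ i ∈ F, f i ^ k) ^ ((w:ℝ)/k) := by
  have hw0 : (0:ℝ) < w := by exact_mod_cast hw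
  have hk0 : (0:ℝ) < k := lt_of_lt_of_le hw0 (by exact_mod_cast hwk)
  have hp : (1:ℝ) ≤ (k:ℝ)/w := (one_le_div hw0).2 (by exact_mod_cast hwk)
  have h := Real.inner_le_weight_mul_Lp_of_nonneg F hp (fun _ => 1) (fun i => f i ^ w)
    (fun _ => zero_le_one) (fun i => pow_nonneg (hf i) w)
  simp only [one_mul, Finset.sum_const, nsmul_eq_mul, mul_one] at h
  have hrw : ∀ i, (f i ^ w : ℝ) ^ ((k:ℝ)/w) = f i ^ k := by
    intro i
    rw [← Real.rpow_natCast (f i) w, ← Real.rpow_mul (hf i)]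
    rw [mul_div_cancel₀ _ (ne_of_gt hw0)]
    exact Real.rpow_natCast (f i) k
  have hinv : ((k:ℝ)/w)⁻¹ = (w:ℝ)/k := by
    rw [inv_div]
  simp only [hrw, hinv] at h
  exact h

open Real in
lemma holder_combine {ι : Type*} (F : Finset ι) (f : ι → ℝ) (hf : ∀ i, 0 ≤ f i)
    {w k ℓ : ℕ} (n p C : ℝ) (hn : 0 ≤ n) (hp : 0 ≤ p) (hC : 0 ≤ C)
    (hw : 1 ≤ w) (hwk : w ≤ k)
    (hcard : (F.card : ℝ) ≤ n ^ ℓ)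
    (hsum : ∑ i ∈ F, f i ^ k ≤ C * n ^ (k + ℓ) * p ^ (k * ℓ)) :
    ∑ i ∈ F, f i ^ w ≤ C ^ ((w:ℝ)/k) * n ^ (ℓ + w) * p ^ (ℓ * w) := by
  have hw0 : (0:ℝ) < w := by exact_mod_cast hw
  have hk0 : (0:ℝ) < k := lt_of_lt_of_le hw0 (by exact_mod_cast hwk)
  set t : ℝ := (w:ℝ)/k with ht
  have ht0 : 0 ≤ t := by positivity
  have ht1 : t ≤ 1 := by
    rw [ht, div_le_one hk0]; exact_mod_cast hwk
  have h1 := holder_pow F f hf hw hwk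
  have h2 : ((F.card : ℝ)) ^ (1 - t) ≤ (n ^ ℓ) ^ (1 - t) :=
    Real.rpow_le_rpow (Nat.cast_nonneg _) hcard (by linarith)
  have h3 : (∑ i ∈ F, f i ^ k) ^ t ≤ (C * n ^ (k + ℓ) * p ^ (k * ℓ)) ^ t :=
    Real.rpow_le_rpow (Finset.sum_nonneg fun i _ => pow_nonneg (hf i) k) hsum ht0
  have h4 : ∑ i ∈ F, f i ^ w ≤ (n ^ ℓ) ^ (1 - t) * (C * n ^ (k + ℓ) * p ^ (k * ℓ)) ^ t := by
    calc ∑ i ∈ F, f i ^ w ≤ _ := h1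
    _ ≤ _ := by
      apply mul_le_mul h2 h3 (Real.rpow_nonneg (Finset.sum_nonneg fun i _ => pow_nonneg (hf i) k) t)
        (Real.rpow_nonneg (pow_nonneg hn ℓ) _)
  refine h4.trans (le_of_eq ?_)
  have hkt : (k:ℝ) * t = w := by rw [ht]; field_simp
  rw [mul_rpow (mul_nonneg hC (pow_nonneg hn _)) (pow_nonneg hp _),
      mul_rpow hC (pow_nonneg hn _)]
  rw [← Real.rpow_natCast n ℓ, ← Real.rpow_natCast n (k + ℓ), ← Real.rpow_natCast p (k * ℓ),
      ← Real.rpow_natCast n (ℓ + w), ← Real.rpow_natCast p (ℓ * w),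
      ← Real.rpow_mul hn, ← Real.rpow_mul hn, ← Real.rpow_mul hp]
  have e1 : (ℓ:ℝ) * (1 - t) + ((k:ℝ) + ℓ) * t = ((ℓ:ℕ) + (w:ℕ) : ℕ) := by
    have : (ℓ:ℝ) * (1 - t) + ((k:ℝ) + ℓ) * t = (ℓ:ℝ) + (k:ℝ) * t := by ring
    rw [this, hkt]; push_cast; ring
  have e2 : ((k:ℝ) * ℓ) * t = ((ℓ * w : ℕ) : ℝ) := by
    have : ((k:ℝ) * ℓ) * t = (ℓ:ℝ) * ((k:ℝ) * t) := by ring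
    rw [this, hkt]; push_cast; ring
  rw [← e1, ← e2]
  rw [Real.rpow_add' hn (by rw [e1]; push_cast; positivity)]
  push_cast
  ring

end Helpers

open Finset Real

open scoped Classical in
lemma bad_sum_le {V : Type} [Fintype V] (G : SimpleGraph V) (α β p : ℝ) (h : ℕ)
    (hα0 : 0 < α) (hα1 : α ≤ 1) (hβ0 : 0 < β) (hp : 0 ≤ p) (hh : 1 ≤ h)
    (δ : ℕ → ℝ)
    (hδ0 : α ≤ δ 0)
    (hδβ : ∀ i, i ≤ h → δ i ≤ β)
    (hδpos : ∀ i, i ≤ h → 0 < δ i)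
    (hδstep : ∀ i, i < h → α + (h:ℝ) * (δ i / β) ^ ((1:ℝ)/(h:ℝ)) ≤ δ (i+1)) :
    ∀ i, i ≤ h → ∀ ℓ w : ℕ, 1 ≤ w → w ≤ ℓ → ℓ ≤ h →
      ∑ S : Fin ℓ → V,
          (if IsGood G α β p h i ℓ S then 0 else (Nat.card (commNbhd G S) : ℝ) ^ w)
        ≤ δ i * (Fintype.card V : ℝ) ^ (ℓ + w) * p ^ (ℓ * w) := by
  set n : ℝ := (Fintype.card V : ℝ) with hn
  have hn0 : 0 ≤ n := Nat.cast_nonneg _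
  have cnonneg : ∀ {m : ℕ} (S : Fin m → V), (0:ℝ) ≤ (Nat.card (commNbhd G S) : ℝ) :=
    fun S => Nat.cast_nonneg _
  have card_univ_fun : ∀ m : ℕ, (Fintype.card (Fin m → V) : ℝ) = n ^ m := by
    intro m
    rw [Fintype.card_fun]
    simp [hn]
  intro i
  induction i with
  | zero =>
      intro _ ℓ w hw hwl hlh
      have hthr : (0:ℝ) ≤ α * p ^ ℓ * n := by positivity
      have hstep1 : ∑ S : Fin ℓ → V,
          (if IsGood G α β p h 0 ℓ S then 0 else (Nat.card (commNbhd G S) : ℝ) ^ w)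
          ≤ ∑ _S : Fin ℓ → V, (α * p ^ ℓ * n) ^ w := by
        refine Finset.sum_le_sum (fun S _ => ?_)
        by_cases hg : IsGood G α β p h 0 ℓ S
        · simp only [hg, if_true]; positivity
        · simp only [hg, if_false]
          rw [isGood_zero_iff] at hg
          push_neg at hg
          exact pow_le_pow_left₀ (cnonneg S) hg.le w
      refine hstep1.trans ?_
      rw [Finset.sum_const, nsmul_eq_mul, Finset.card_univ, card_univ_fun ℓ]
      have : n ^ ℓ * (α * p ^ ℓ * n) ^ w = α ^ w * (n ^ (ℓ + w) * p ^ (ℓ * w)) := by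
        rw [mul_pow, mul_pow, ← pow_mul, pow_add]
        ring
      rw [this]
      have hαw : α ^ w ≤ δ 0 := by
        calc α ^ w ≤ α ^ 1 := pow_le_pow_of_le_one hα0.le hα1 hw
        _ = α := pow_one α
        _ ≤ δ 0 := hδ0
      have hX : (0:ℝ) ≤ n ^ (ℓ + w) * p ^ (ℓ * w) := by positivity
      calc α ^ w * (n ^ (ℓ + w) * p ^ (ℓ * w)) ≤ δ 0 * (n ^ (ℓ + w) * p ^ (ℓ * w)) :=
            mul_le_mul_of_nonneg_right hαw hX
      _ = δ 0 * n ^ (ℓ + w) * p ^ (ℓ * w) := by ring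
  | succ i ih =>
      intro hih ℓ w hw hwl hlh
      have hi : i ≤ h := Nat.le_of_succ_le hih
      have histep : i < h := Nat.lt_of_succ_le hih
      have hw1 : 1 ≤ ℓ := le_trans hw hwl
      set c : (Fin ℓ → V) → ℝ := fun S => (Nat.card (commNbhd G S) : ℝ) with hc
      set X : ℝ := n ^ (ℓ + w) * p ^ (ℓ * w) with hX
      have hX0 : 0 ≤ X := by positivity
      -- the bad finsets
      set F : Finset (Fin ℓ → V) := univ.filter (fun S => ¬ IsGood G α β p h (i+1) ℓ S) with hF
      set F0 : Finset (Fin ℓ → V) := univ.filter (fun S => ¬ (α * p ^ ℓ * n ≤ c S)) with hF0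
      set Fk : ℕ → Finset (Fin ℓ → V) := fun k => univ.filter (fun S =>
        ¬ ((1 - β) * c S ^ k ≤
          (Nat.card {T : Fin k → V // (∀ a, T a ∈ commNbhd G S) ∧ IsGood G α β p h i k T} : ℝ)))
        with hFk
      have hgoal1 : ∑ S : Fin ℓ → V,
          (if IsGood G α β p h (i+1) ℓ S then 0 else c S ^ w) = ∑ S ∈ F, c S ^ w := by
        rw [hF, Finset.sum_filter]
        refine Finset.sum_congr rfl (fun S _ => ?_)
        by_cases hg : IsGood G α β p h (i+1) ℓ S <;> simp [hg]
      rw [hgoal1]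
      have hsub : F ⊆ F0 ∪ (Icc ℓ h).biUnion Fk := by
        intro S hS
        rw [hF, Finset.mem_filter] at hS
        by_contra hmem
        rw [Finset.mem_union, Finset.mem_biUnion] at hmem
        push_neg at hmem
        obtain ⟨h1, h2⟩ := hmem
        rw [hF0, Finset.mem_filter] at h1
        push_neg at h1
        refine hS.2 ((isGood_succ_iff G α β p h i ℓ S).2 ⟨h1 (Finset.mem_univ S), ?_⟩)
        intro k hk1 hk2
        have h3 := h2 k (Finset.mem_Icc.2 ⟨hk1, hk2⟩)
        rw [hFk, Finset.mem_filter] at h3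
        push_neg at h3
        exact h3 (Finset.mem_univ S)
      have hnonneg : ∀ S, (0:ℝ) ≤ c S ^ w := fun S => pow_nonneg (cnonneg S) w
      have hsplit : ∑ S ∈ F, c S ^ w ≤
          ∑ S ∈ F0, c S ^ w + ∑ k ∈ Icc ℓ h, ∑ S ∈ Fk k, c S ^ w := by
        calc ∑ S ∈ F, c S ^ w ≤ ∑ S ∈ F0 ∪ (Icc ℓ h).biUnion Fk, c S ^ w :=
              Finset.sum_le_sum_of_subset_of_nonneg hsub (fun S _ _ => hnonneg S)
        _ ≤ _ := by
              refine le_trans (sum_union_le' _ _ _ hnonneg) ?_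
              exact add_le_add le_rfl (sum_biUnion_le' _ _ _ hnonneg)
      -- F0 bound
      have hF0bound : ∑ S ∈ F0, c S ^ w ≤ α * X := by
        have : ∑ S ∈ F0, c S ^ w ≤ ∑ _S ∈ F0, (α * p ^ ℓ * n) ^ w := by
          refine Finset.sum_le_sum (fun S hS => ?_)
          rw [hF0, Finset.mem_filter] at hS
          push_neg at hS
          exact pow_le_pow_left₀ (cnonneg S) hS.2.le w
        refine this.trans ?_
        rw [Finset.sum_const, nsmul_eq_mul]
        have hcard : ((F0.card : ℝ)) ≤ n ^ ℓ := by
          rw [← card_univ_fun ℓ]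
          exact_mod_cast Nat.cast_le.2 (Finset.card_le_card (Finset.subset_univ F0))
        have hthr : (0:ℝ) ≤ (α * p ^ ℓ * n) ^ w := by positivity
        calc ((F0.card : ℝ)) * (α * p ^ ℓ * n) ^ w ≤ n ^ ℓ * (α * p ^ ℓ * n) ^ w :=
              mul_le_mul_of_nonneg_right hcard hthr
        _ = α ^ w * X := by
              rw [hX, mul_pow, mul_pow, ← pow_mul, pow_add]
              ring
        _ ≤ α * X := by
              refine mul_le_mul_of_nonneg_right ?_ hX0
              calc α ^ w ≤ α ^ 1 := pow_le_pow_of_le_one hα0.le hα1 hw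
              _ = α := pow_one α
      -- per-k bound
      have hFkbound : ∀ k ∈ Icc ℓ h, ∑ S ∈ Fk k, c S ^ w ≤ (δ i / β) ^ ((1:ℝ)/(h:ℝ)) * X := by
        intro k hk
        rw [Finset.mem_Icc] at hk
        have hwk : w ≤ k := le_trans hwl hk.1
        have hC0 : (0:ℝ) ≤ δ i / β := le_of_lt (div_pos (hδpos i hi) hβ0)
        -- key: sum of c^k over Fk k
        have hkey : ∑ S ∈ Fk k, c S ^ k ≤ (δ i / β) * n ^ (k + ℓ) * p ^ (k * ℓ) := by
          have hper : ∀ S ∈ Fk k, β * c S ^ k ≤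
              ((univ.filter (fun T : Fin k → V =>
                (∀ a, T a ∈ commNbhd G S) ∧ ¬ IsGood G α β p h i k T)).card : ℝ) := by
            intro S hS
            rw [hFk, Finset.mem_filter] at hS
            have hbad := hS.2
            push_neg at hbad
            have htot := card_split (fun T : Fin k → V => ∀ a, T a ∈ commNbhd G S)
              (fun T => IsGood G α β p h i k T)
            rw [card_tuples (commNbhd G S) k] at htot
            have hfc : ((univ.filter (fun T : Fin k → V =>
                (∀ a, T a ∈ commNbhd G S) ∧ ¬ IsGood G α β p h i k T)).card)
                = Nat.card {T : Fin k → V // (∀ a, T a ∈ commNbhd G S) ∧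
                    ¬ IsGood G α β p h i k T} := by
              rw [Nat.card_eq_fintype_card, Fintype.card_subtype]
            rw [hfc]
            have hreal : (Nat.card {T : Fin k → V // (∀ a, T a ∈ commNbhd G S) ∧
                    IsGood G α β p h i k T} : ℝ)
                + (Nat.card {T : Fin k → V // (∀ a, T a ∈ commNbhd G S) ∧
                    ¬ IsGood G α β p h i k T} : ℝ) = c S ^ k := by
              have hcast := congrArg (Nat.cast (R := ℝ)) htot
              push_cast at hcast
              rw [hc]
              exact hcast
            linarith
          have h1 : β * ∑ S ∈ Fk k, c S ^ k ≤
              ∑ S ∈ Fk k, ((univ.filter (fun T : Fin k → V =>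
                (∀ a, T a ∈ commNbhd G S) ∧ ¬ IsGood G α β p h i k T)).card : ℝ) := by
            rw [Finset.mul_sum]
            exact Finset.sum_le_sum hper
          have h2 : ∑ S ∈ Fk k, ((univ.filter (fun T : Fin k → V =>
                (∀ a, T a ∈ commNbhd G S) ∧ ¬ IsGood G α β p h i k T)).card : ℝ)
              ≤ ∑ S : Fin ℓ → V, ((univ.filter (fun T : Fin k → V =>
                (∀ a, T a ∈ commNbhd G S) ∧ ¬ IsGood G α β p h i k T)).card : ℝ) :=
            Finset.sum_le_sum_of_subset_of_nonneg (Finset.subset_univ _)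
              (fun _ _ _ => Nat.cast_nonneg _)
          have h3 : ∑ S : Fin ℓ → V, ((univ.filter (fun T : Fin k → V =>
                (∀ a, T a ∈ commNbhd G S) ∧ ¬ IsGood G α β p h i k T)).card : ℝ)
              = ∑ T : Fin k → V,
                  (if IsGood G α β p h i k T then 0
                    else ((Nat.card (commNbhd G T)) : ℝ) ^ ℓ) := by
            have hdc : (∑ S : Fin ℓ → V, ((univ.filter (fun T : Fin k → V =>
                  (∀ a, T a ∈ commNbhd G S) ∧ ¬ IsGood G α β p h i k T)).card))
                = ∑ T : Fin k → V,
                    (if ¬ IsGood G α β p h i k T then (Nat.card (commNbhd G T)) ^ ℓ else 0) :=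
              double_count G ℓ k (fun T => ¬ IsGood G α β p h i k T)
            rw [← Nat.cast_sum, hdc, Nat.cast_sum]
            refine Finset.sum_congr rfl (fun T _ => ?_)
            by_cases hg : IsGood G α β p h i k T <;> simp [hg]
          have h4 := ih hi k ℓ hw1 hk.1 hk.2
          rw [h3] at h2
          have h5 : β * ∑ S ∈ Fk k, c S ^ k ≤ δ i * n ^ (k + ℓ) * p ^ (k * ℓ) :=
            le_trans h1 (le_trans h2 h4)
          rw [show (δ i / β) * n ^ (k + ℓ) * p ^ (k * ℓ)
              = (δ i * n ^ (k + ℓ) * p ^ (k * ℓ)) / β by ring, le_div_iff₀ hβ0]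
          linarith
        -- apply holder
        have hcard : ((Fk k).card : ℝ) ≤ n ^ ℓ := by
          rw [← card_univ_fun ℓ]
          exact_mod_cast Nat.cast_le.2 (Finset.card_le_card (Finset.subset_univ (Fk k)))
        have hhold := holder_combine (Fk k) c (fun S => cnonneg S) n p (δ i / β)
          hn0 hp hC0 hw hwk hcard hkey
        refine hhold.trans ?_
        have hexp : (δ i / β) ^ ((w:ℝ)/(k:ℝ)) ≤ (δ i / β) ^ ((1:ℝ)/(h:ℝ)) := by
          rcases eq_or_lt_of_le (div_le_one_of_le₀ (hδβ i hi) hβ0.le) with heq | hlt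
          · rw [heq]; simp
          · refine Real.rpow_le_rpow_of_exponent_ge (div_pos (hδpos i hi) hβ0) hlt.le ?_
            have hk0 : (0:ℝ) < k := by
              have h1k : (1:ℕ) ≤ k := le_trans hw hwk
              exact_mod_cast Nat.lt_of_lt_of_le Nat.zero_lt_one h1k
            have hh0 : (0:ℝ) < h := by exact_mod_cast hh
            rw [div_le_div_iff₀ hh0 hk0]
            have hw1' : (1:ℝ) ≤ w := by exact_mod_cast hw
            have hkh : (k:ℝ) ≤ h := by exact_mod_cast hk.2
            nlinarith
        calc (δ i / β) ^ ((w:ℝ)/(k:ℝ)) * n ^ (ℓ + w) * p ^ (ℓ * w)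
            ≤ (δ i / β) ^ ((1:ℝ)/(h:ℝ)) * n ^ (ℓ + w) * p ^ (ℓ * w) := by
              refine mul_le_mul_of_nonneg_right
                (mul_le_mul_of_nonneg_right hexp (by positivity)) (by positivity)
        _ = (δ i / β) ^ ((1:ℝ)/(h:ℝ)) * X := by rw [hX]; ring
      -- combine
      have hIcc : ((Icc ℓ h).card : ℝ) ≤ (h:ℝ) := by
        rw [Nat.card_Icc]
        have : h + 1 - ℓ ≤ h := by omega
        exact_mod_cast this
      calc ∑ S ∈ F, c S ^ w ≤ ∑ S ∈ F0, c S ^ w + ∑ k ∈ Icc ℓ h, ∑ S ∈ Fk k, c S ^ w := hsplit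
      _ ≤ α * X + ((Icc ℓ h).card : ℝ) * ((δ i / β) ^ ((1:ℝ)/(h:ℝ)) * X) := by
            refine add_le_add hF0bound ?_
            calc ∑ k ∈ Icc ℓ h, ∑ S ∈ Fk k, c S ^ w
                ≤ ∑ _k ∈ Icc ℓ h, (δ i / β) ^ ((1:ℝ)/(h:ℝ)) * X :=
                  Finset.sum_le_sum hFkbound
            _ = _ := by rw [Finset.sum_const, nsmul_eq_mul]
      _ ≤ α * X + (h:ℝ) * ((δ i / β) ^ ((1:ℝ)/(h:ℝ)) * X) := by
            refine add_le_add le_rfl (mul_le_mul_of_nonneg_right hIcc ?_)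
            exact mul_nonneg (Real.rpow_nonneg (le_of_lt (div_pos (hδpos i hi) hβ0)) _) hX0
      _ = (α + (h:ℝ) * (δ i / β) ^ ((1:ℝ)/(h:ℝ))) * X := by ring
      _ ≤ δ (i+1) * X := mul_le_mul_of_nonneg_right (hδstep i histep) hX0
      _ = δ (i+1) * n ^ (ℓ + w) * p ^ (ℓ * w) := by rw [hX]; ring

open Finset Real

open scoped Classical in
lemma comm_card_eq_filter {V : Type} [Fintype V] (G : SimpleGraph V) {m : ℕ} (S : Fin m → V) :
    Nat.card (commNbhd G S) = (univ.filter (fun v => v ∈ commNbhd G S)).card := by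
  rw [Nat.card_eq_fintype_card, Fintype.card_subtype]

open scoped Classical in
lemma nat_card_adj_from {V : Type} [Fintype V] (G : SimpleGraph V) (v : V) :
    Nat.card {u | G.Adj u v} = G.degree v := by
  have hset : {u | G.Adj u v} = G.neighborSet v := by
    ext u; exact G.adj_comm u v
  rw [hset, Nat.card_eq_fintype_card, SimpleGraph.card_neighborSet_eq_degree]

open scoped Classical in
lemma total_sum_eq {V : Type} [Fintype V] (G : SimpleGraph V) (j : ℕ) :
    ∑ S : Fin j → V, (Nat.card (commNbhd G S)) = ∑ v : V, (G.degree v) ^ j := by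
  have h1 : ∀ S : Fin j → V, Nat.card (commNbhd G S)
      = (univ.filter (fun v => v ∈ commNbhd G S)).card := fun S => comm_card_eq_filter G S
  simp only [h1, Finset.card_filter]
  rw [Finset.sum_comm]
  refine Finset.sum_congr rfl (fun v _ => ?_)
  have h2 : ∀ S : Fin j → V, (v ∈ commNbhd G S) ↔ (∀ a, S a ∈ {u | G.Adj u v}) := by
    intro S; exact Iff.rfl
  calc (∑ S : Fin j → V, if v ∈ commNbhd G S then 1 else 0)
      = (univ.filter (fun S : Fin j → V => ∀ a, S a ∈ {u | G.Adj u v})).card := by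
        rw [Finset.card_filter]
        exact Finset.sum_congr rfl (fun S _ => if_congr (h2 S) rfl rfl)
  _ = Nat.card {u | G.Adj u v} ^ j := filter_card_tuples _ j
  _ = G.degree v ^ j := by rw [nat_card_adj_from]

open scoped Classical in
lemma total_sum_ge {V : Type} [Fintype V] [Nonempty V] (G : SimpleGraph V) (j : ℕ)
    (hj : 1 ≤ j) :
    (Fintype.card V : ℝ) ^ (j+1)
        * (2 * (Nat.card G.edgeSet : ℝ) / (Fintype.card V : ℝ)^2) ^ j
      ≤ ∑ S : Fin j → V, (Nat.card (commNbhd G S) : ℝ) := by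
  set n : ℝ := (Fintype.card V : ℝ) with hn
  have hn1 : (1:ℝ) ≤ n := by
    rw [hn]; exact_mod_cast Fintype.card_pos
  have hn0 : (0:ℝ) < n := lt_of_lt_of_le zero_lt_one hn1
  set p : ℝ := 2 * (Nat.card G.edgeSet : ℝ) / n^2 with hpdef
  have hdeg : (∑ v : V, (G.degree v : ℝ)) = p * n^2 := by
    rw [hpdef, div_mul_cancel₀ _ (by positivity)]
    have : ∑ v : V, G.degree v = 2 * G.edgeFinset.card :=
      SimpleGraph.sum_degrees_eq_twice_card_edges G
    have hedge : Nat.card G.edgeSet = G.edgeFinset.card := by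
      rw [Nat.card_eq_fintype_card, SimpleGraph.edgeFinset_card]
    rw [hedge]
    exact_mod_cast this
  have hjensen := pow_sum_div_card_le_sum_pow (s := (univ : Finset V))
    (f := fun v => (G.degree v : ℝ)) (fun v _ => Nat.cast_nonneg _) (j - 1)
  rw [Nat.sub_add_cancel hj] at hjensen
  have hcard : ((univ : Finset V).card : ℝ) = n := by rw [hn, Finset.card_univ]
  rw [hcard, hdeg] at hjensen
  have htot : (∑ S : Fin j → V, (Nat.card (commNbhd G S) : ℝ))
      = ∑ v : V, ((G.degree v : ℝ)) ^ j := by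
    rw [← Nat.cast_sum, total_sum_eq G j, Nat.cast_sum]
    push_cast
    rfl
  rw [htot]
  refine le_trans ?_ hjensen
  rw [le_div_iff₀ (by positivity)]
  rw [mul_pow, ← pow_mul]
  have hexp : n ^ (j+1) * p ^ j * n ^ (j-1) = p ^ j * n ^ (2 * j) := by
    have h2j : j + 1 + (j-1) = 2*j := by omega
    rw [mul_comm (n ^ (j+1)) (p ^ j), mul_assoc, ← pow_add, h2j]
  rw [hexp]

/-- when `p = 0`, every sequence of positive length is good -/
lemma isGood_of_p_zero {V : Type} [Fintype V] (G : SimpleGraph V) (α β : ℝ) (h : ℕ)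
    (hβ : 0 ≤ β) :
    ∀ i k, 1 ≤ k → ∀ T : Fin k → V, IsGood G α β 0 h i k T := by
  intro i
  induction i with
  | zero =>
      intro k hk T
      rw [isGood_zero_iff]
      rw [zero_pow (by omega : k ≠ 0)]
      simp
  | succ i ih =>
      intro k hk T
      rw [isGood_succ_iff]
      constructor
      · rw [zero_pow (by omega : k ≠ 0)]; simp
      · intro m hm1 hm2
        have hall : ∀ T' : Fin m → V, (∀ a, T' a ∈ commNbhd G T) ∧ IsGood G α β 0 h i m T'
            ↔ (∀ a, T' a ∈ commNbhd G T) := by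
          intro T'
          constructor
          · exact fun hx => hx.1
          · exact fun hx => ⟨hx, ih m (le_trans hk hm1) T'⟩
        have hcard : Nat.card {T' : Fin m → V // (∀ a, T' a ∈ commNbhd G T) ∧
            IsGood G α β 0 h i m T'} = Nat.card {T' : Fin m → V // ∀ a, T' a ∈ commNbhd G T} :=
          Nat.card_congr (Equiv.subtypeEquivRight hall)
        rw [hcard, card_tuples]
        push_cast
        refine mul_le_of_le_one_left (by positivity) (by linarith)

open Finset Real in
lemma delta_exists (h : ℕ) (hh : 1 ≤ h) (β : ℝ) (hβ0 : 0 < β) (hβ1 : β < 1) :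
    ∃ α : ℝ, ∃ δ : ℕ → ℝ, 0 < α ∧ α ≤ 1 ∧ α ≤ δ 0 ∧ (∀ i, i ≤ h → δ i ≤ β) ∧
      (∀ i, i ≤ h → 0 < δ i) ∧
      (∀ i, i < h → α + (h:ℝ) * (δ i / β) ^ ((1:ℝ)/(h:ℝ)) ≤ δ (i+1)) := by
  have hh0 : (0:ℝ) < h := by exact_mod_cast hh
  set θ : ℝ := β / (2*h) with hθ
  have hθ0 : 0 < θ := by rw [hθ]; positivity
  have hθ1 : θ < 1 := by
    rw [hθ, div_lt_one (by positivity)]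
    have h1 : (1:ℝ) ≤ h := by exact_mod_cast hh
    linarith
  set a : ℕ → ℕ := fun i => h * ∑ t ∈ Finset.range (h - i), h ^ t with ha
  set δ : ℕ → ℝ := fun i => β * θ ^ (a i) with hδ
  set α : ℝ := (β/2) * θ ^ (a 0) with hα
  have hamono : ∀ i, a i ≤ a 0 := by
    intro i
    rw [ha]
    refine Nat.mul_le_mul_left h (Finset.sum_le_sum_of_subset ?_)
    exact Finset.range_subset_range.2 (by omega)
  have hθpow : ∀ i, θ ^ (a i) ≤ 1 := fun i => pow_le_one₀ hθ0.le hθ1.le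
  have hαδ : ∀ i, α ≤ (β/2) * θ ^ (a i) := by
    intro i
    rw [hα]
    exact mul_le_mul_of_nonneg_left (pow_le_pow_of_le_one hθ0.le hθ1.le (hamono i))
      (by positivity)
  refine ⟨α, δ, by rw [hα]; positivity, ?_, ?_, ?_, ?_, ?_⟩
  · rw [hα]
    calc (β/2) * θ ^ (a 0) ≤ (β/2) * 1 :=
          mul_le_mul_of_nonneg_left (hθpow 0) (by positivity)
    _ ≤ 1 := by linarith
  · rw [hα, hδ]
    exact mul_le_mul_of_nonneg_right (by linarith) (by positivity)
  · intro i _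
    rw [hδ]
    calc β * θ ^ (a i) ≤ β * 1 := mul_le_mul_of_nonneg_left (hθpow i) hβ0.le
    _ = β := mul_one β
  · intro i _
    rw [hδ]; positivity
  · intro i hi
    have hkey : a i = h * (a (i+1) + 1) := by
      simp only [ha]
      have h1 : h - i = (h - (i+1)) + 1 := by omega
      rw [h1, geom_sum_succ]
    have hrpow : (θ ^ (a i)) ^ ((1:ℝ)/(h:ℝ)) = θ ^ (a (i+1) + 1) := by
      rw [← Real.rpow_natCast θ (a i), ← Real.rpow_mul hθ0.le]
      have : ((a i : ℕ) : ℝ) * ((1:ℝ)/(h:ℝ)) = ((a (i+1) + 1 : ℕ) : ℝ) := by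
        rw [hkey]
        push_cast
        field_simp
      rw [this, Real.rpow_natCast]
    have hdb : δ i / β = θ ^ (a i) := by
      simp only [hδ]
      exact mul_div_cancel_left₀ _ (ne_of_gt hβ0)
    rw [hdb, hrpow]
    have hstep2 : (h:ℝ) * θ ^ (a (i+1) + 1) = (β/2) * θ ^ (a (i+1)) := by
      rw [pow_succ, hθ]
      field_simp
    rw [hstep2]
    have := hαδ (i+1)
    simp only [hδ]
    linarith


open scoped Classical in
/-- **Theorem 3.3.** (Nested goodness lemma for `r = 1`.) For `h ≥ 1` and `0 < β < 1`
there is `α > 0` such that for every graph `G` on `n` vertices with `p = 2e(G)/n²`,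
for all `i, j ∈ [h]`, the sum of `|N(S)|` over `i`-good length-`j` sequences is at
least `(1-β) n^{j+1} p^j`; in particular some `i`-good sequence `S` of length `j`
has `|N(S)| ≥ (1-β) p^j n`. -/
theorem nested_goodness_one (h : ℕ) (hh : 1 ≤ h) (β : ℝ) (hβ0 : 0 < β) (hβ1 : β < 1) :
    ∃ α : ℝ, 0 < α ∧
      ∀ (V : Type) [Fintype V] [Nonempty V] (G : SimpleGraph V),
        ∀ i j : ℕ, 1 ≤ i → i ≤ h → 1 ≤ j → j ≤ h →
          let p : ℝ := 2 * (Nat.card G.edgeSet : ℝ) / (Fintype.card V : ℝ) ^ 2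
          ((1 - β) * (Fintype.card V : ℝ) ^ (j + 1) * p ^ j ≤
            ∑ S : Fin j → V,
              (if IsGood G α β p h i j S then (Nat.card (commNbhd G S) : ℝ) else 0)) ∧
          ∃ S : Fin j → V, IsGood G α β p h i j S ∧
            (1 - β) * p ^ j * (Fintype.card V : ℝ) ≤ (Nat.card (commNbhd G S) : ℝ) := by
  obtain ⟨α, δ, hα0, hα1, hδ0, hδβ, hδpos, hδstep⟩ := delta_exists h hh β hβ0 hβ1
  refine ⟨α, hα0, ?_⟩
  intro V _ _ G i j hi1 hih hj1 hjh
  intro p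
  have hpdef : p = 2 * (Nat.card G.edgeSet : ℝ) / (Fintype.card V : ℝ) ^ 2 := rfl
  set n : ℝ := (Fintype.card V : ℝ) with hn
  have hn1 : (1:ℝ) ≤ n := by rw [hn]; exact_mod_cast Fintype.card_pos
  have hp0 : 0 ≤ p := by rw [hpdef]; positivity
  have hbad := bad_sum_le G α β p h hα0 hα1 hβ0 hp0 hh δ hδ0 hδβ hδpos hδstep
    i hih j 1 le_rfl hj1 hjh
  simp only [Nat.mul_one] at hbad
  have htot := total_sum_ge G j hj1
  rw [← hpdef, ← hn] at htot
  have hX0 : (0:ℝ) ≤ n ^ (j+1) * p ^ j := by positivity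
  have hδi : δ i * (n ^ (j+1) * p ^ j) ≤ β * (n ^ (j+1) * p ^ j) :=
    mul_le_mul_of_nonneg_right (hδβ i hih) hX0
  have hsum : (1 - β) * n ^ (j + 1) * p ^ j ≤
      ∑ S : Fin j → V,
        (if IsGood G α β p h i j S then (Nat.card (commNbhd G S) : ℝ) else 0) := by
    have hsplit : ∀ S : Fin j → V,
        (if IsGood G α β p h i j S then (Nat.card (commNbhd G S) : ℝ) else 0)
          = (Nat.card (commNbhd G S) : ℝ)
            - (if IsGood G α β p h i j S then 0 else (Nat.card (commNbhd G S) : ℝ) ^ 1) := by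
      intro S
      by_cases hg : IsGood G α β p h i j S <;> simp [hg]
    simp only [hsplit]
    rw [Finset.sum_sub_distrib]
    have h1 : δ i * n ^ (j + 1) * p ^ j ≤ β * (n ^ (j+1) * p ^ j) := by
      rw [mul_assoc]; exact hδi
    linarith
  refine ⟨hsum, ?_⟩
  have hne : (Finset.univ : Finset (Fin j → V)).Nonempty := Finset.univ_nonempty
  have hconst : ∑ _S : Fin j → V, ((1 - β) * p ^ j * n) / 1
      = (Fintype.card (Fin j → V) : ℝ) * ((1 - β) * p ^ j * n) := by
    rw [Finset.sum_const, nsmul_eq_mul, Finset.card_univ]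
    ring
  have hcardfun : (Fintype.card (Fin j → V) : ℝ) = n ^ j := by
    rw [Fintype.card_fun]; simp [hn]
  have hsum2 : ∑ _S : Fin j → V, (1 - β) * p ^ j * n
      ≤ ∑ S : Fin j → V,
          (if IsGood G α β p h i j S then (Nat.card (commNbhd G S) : ℝ) else 0) := by
    rw [Finset.sum_const, nsmul_eq_mul, Finset.card_univ, hcardfun]
    calc n ^ j * ((1 - β) * p ^ j * n) = (1 - β) * n ^ (j + 1) * p ^ j := by
          rw [pow_succ]; ring
    _ ≤ _ := hsum
  obtain ⟨S, _, hS⟩ := Finset.exists_le_of_sum_le hne hsum2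
  by_cases hg : IsGood G α β p h i j S
  · refine ⟨S, hg, ?_⟩
    simpa [hg] using hS
  · have h0 : (1 - β) * p ^ j * n ≤ 0 := by simpa [hg] using hS
    have hpj : p ^ j = 0 := by
      have hpj0 : 0 ≤ p ^ j := by positivity
      by_contra hne0
      have hpos : 0 < p ^ j := lt_of_le_of_ne hpj0 (Ne.symm hne0)
      have hposall : 0 < (1 - β) * p ^ j * n :=
        mul_pos (mul_pos (by linarith) hpos) (by linarith)
      linarith
    have hpz : p = 0 := by
      exact pow_eq_zero_iff (M₀ := ℝ) (by omega : j ≠ 0) |>.1 hpj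
    refine ⟨S, ?_, ?_⟩
    · rw [hpz]
      exact isGood_of_p_zero G α β h hβ0.le i j hj1 S
    · rw [hpj]
      simp
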